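/- Pythagorean identity for Bregman projections onto affine sets: let f : ℝ^d → ℝ be differentiable and strictly convex, S ⊆ ℝ^d an affine subspace, q ∈ ℝ^d, and suppose p' ∈ S minimizes B_f(·, q) over S. Then for every p ∈ S, B_f(p, q) = B_f(p, p') + B_f(p', q). -/

import Mathlib

open Real
open scoped InnerProductSpace

/-- Pythagorean identity for Bregman projections onto affine subspaces:
if `p'` minimizes the Bregman divergence `B_f(·, q)` of a differentiable strictly convex
`f` over an affine subspace `S`, then `B_f(p,q) = B_f(p,p') + B_f(p',q)` for all `p ∈ S`. -/
theorem stmt_8 {d : ℕ} (f : EuclideanSpace ℝ (Fin d) → ℝ)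
    (f' : EuclideanSpace ℝ (Fin d) → EuclideanSpace ℝ (Fin d))
    (hf : StrictConvexOn ℝ Set.univ f)
    (hf' : ∀ x, HasGradientAt f (f' x) x)
    (S : AffineSubspace ℝ (EuclideanSpace ℝ (Fin d)))
    (q p' : EuclideanSpace ℝ (Fin d)) (hp'S : p' ∈ S)
    (hmin : ∀ p ∈ S, f p' - f q - ⟪f' q, p' - q⟫_ℝ ≤ f p - f q - ⟪f' q, p - q⟫_ℝ) :
    ∀ p ∈ S, f p - f q - ⟪f' q, p - q⟫_ℝ =
      (f p - f p' - ⟪f' p', p - p'⟫_ℝ) + (f p' - f q - ⟪f' q, p' - q⟫_ℝ) := by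
  intro p hpS
  set v := p - p' with hv
  -- key: ⟪f' p' - f' q, v⟫ = 0
  have hline : ∀ t : ℝ, p' + t • v ∈ S := by
    intro t
    have := S.smul_vsub_vadd_mem t hpS hp'S hp'S
    simpa [vsub_eq_sub, vadd_eq_add, hv, add_comm] using this
  set φ : ℝ → ℝ := fun t => f (p' + t • v) - ⟪f' q, p' + t • v - q⟫_ℝ with hφ
  have hmin0 : IsLocalMin φ 0 := by
    refine Filter.Eventually.of_forall fun t => ?_
    have := hmin _ (hline t)
    simp only [hφ]
    simp only [zero_smul, add_zero] at *
    linarith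
  have hderiv : HasDerivAt φ (⟪f' p', v⟫_ℝ - ⟪f' q, v⟫_ℝ) 0 := by
    have hc : HasDerivAt (fun t : ℝ => p' + t • v) v 0 := by
      simpa using ((hasDerivAt_id (0:ℝ)).smul_const v).const_add p'
    have h1 : HasDerivAt (fun t : ℝ => f (p' + t • v)) (⟪f' p', v⟫_ℝ) 0 := by
      have hg := (hf' (p' + (0:ℝ) • v)).hasFDerivAt
      have := hg.comp_hasDerivAt 0 hc
      simp [InnerProductSpace.toDual_apply_apply, real_inner_comm] at this; exact this
    have h2 : HasDerivAt (fun t : ℝ => ⟪f' q, p' + t • v - q⟫_ℝ) (⟪f' q, v⟫_ℝ) 0 := by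
      have hs : HasDerivAt (fun t : ℝ => p' + t • v - q) v 0 := hc.sub_const q
      simpa using (hasDerivAt_const (0:ℝ) (f' q)).inner ℝ hs
    exact h1.sub h2
  have hkey : ⟪f' p', v⟫_ℝ - ⟪f' q, v⟫_ℝ = 0 := hmin0.hasDerivAt_eq_zero hderiv
  have : ⟪f' p', p - p'⟫_ℝ = ⟪f' q, p - p'⟫_ℝ := by
    rw [← hv]; linarith
  have hexp : ⟪f' q, p - q⟫_ℝ = ⟪f' q, p - p'⟫_ℝ + ⟪f' q, p' - q⟫_ℝ := by
    rw [← inner_add_right, sub_add_sub_cancel]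
  rw [hexp, this]; ring
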